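/- Let γ > 0, and set Q(z) = e^{-1/(2z)}·√(z/(1−z)) and K(z) = −(1/γ)·√((1−z)/z³)·(2z−1)·e^{1/(2z)} + (√(2πe)/γ)·erfi(√((1−z)/(2z))) with erfi(x) = (2/√π)∫_0^x e^{t²} dt. Then for every 0 < a < 1 the function z ↦ Q(z)K(z) is integrable on (a,1), while for every 0 < b < 1, ∫_ε^b Q(z)K(z) dz → +∞ as ε → 0⁺. -/

import Mathlib

open MeasureTheory

/-- The imaginary error function erfi(x) = (2/√π)∫_0^x e^{t²} dt. -/
noncomputable def erfi (x : ℝ) : ℝ :=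
  (2 / Real.sqrt Real.pi) * ∫ t in (0 : ℝ)..x, Real.exp (t ^ 2)

/-- Optimal homodyne scale density Q(z) = e^{-1/(2z)}·√(z/(1−z)). -/
noncomputable def Qhom (z : ℝ) : ℝ :=
  Real.exp (-1 / (2 * z)) * Real.sqrt (z / (1 - z))

/-- Optimal homodyne function
K(z) = −(1/γ)√((1−z)/z³)(2z−1)e^{1/(2z)} + (√(2πe)/γ)erfi(√((1−z)/(2z))). -/
noncomputable def Khom (γ z : ℝ) : ℝ :=
  -(1 / γ) * Real.sqrt ((1 - z) / z ^ 3) * (2 * z - 1) * Real.exp (1 / (2 * z))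
    + (Real.sqrt (2 * Real.pi * Real.exp 1) / γ) *
        erfi (Real.sqrt ((1 - z) / (2 * z)))

open Real Filter in
lemma continuous_erfi : Continuous erfi := by
  unfold erfi
  exact continuous_const.mul (intervalIntegral.continuous_primitive
    (fun a b => ((Real.continuous_exp.comp (continuous_pow 2)).intervalIntegrable a b)) 0)

lemma erfi_nonneg {x : ℝ} (hx : 0 ≤ x) : 0 ≤ erfi x := by
  unfold erfi
  apply mul_nonneg (by positivity)
  exact intervalIntegral.integral_nonneg hx (fun t _ => (Real.exp_pos _).le)

lemma erfi_le {x : ℝ} (hx : 0 ≤ x) : erfi x ≤ (2 / Real.sqrt Real.pi) * (x * Real.exp (x ^ 2)) := by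
  unfold erfi
  apply mul_le_mul_of_nonneg_left _ (by positivity)
  calc ∫ t in (0:ℝ)..x, Real.exp (t ^ 2)
      ≤ ∫ _ in (0:ℝ)..x, Real.exp (x ^ 2) := by
        apply intervalIntegral.integral_mono_on hx
          ((Real.continuous_exp.comp (continuous_pow 2)).intervalIntegrable 0 x)
          (intervalIntegrable_const)
        intro t ht
        exact Real.exp_le_exp.2 (pow_le_pow_left₀ ht.1 ht.2 2)
    _ = x * Real.exp (x ^ 2) := by simp [smul_eq_mul, mul_comm]

lemma QK_eq (γ : ℝ) {z : ℝ} (hz0 : 0 < z) (hz1 : z < 1) :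
    Qhom z * Khom γ z = (1 - 2*z)/(γ*z)
      + (Real.sqrt (2*Real.pi*Real.exp 1)/γ) *
          (Qhom z * erfi (Real.sqrt ((1-z)/(2*z)))) := by
  have h1z : (0:ℝ) < 1 - z := by linarith
  have h1 : Real.exp (-1/(2*z)) * Real.exp (1/(2*z)) = 1 := by
    rw [← Real.exp_add, show -1/(2*z) + 1/(2*z) = 0 by ring, Real.exp_zero]
  have h2 : Real.sqrt (z/(1-z)) * Real.sqrt ((1-z)/z^3) = 1/z := by
    rw [← Real.sqrt_mul (by positivity),
      show z/(1-z) * ((1-z)/z^3) = (1/z)^2 by field_simp]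
    exact Real.sqrt_sq (by positivity)
  have key : (Real.exp (-1/(2*z)) * Real.sqrt (z/(1-z))) *
      (-(1/γ) * Real.sqrt ((1-z)/z^3) * (2*z-1) * Real.exp (1/(2*z))) = (1-2*z)/(γ*z) := by
    calc (Real.exp (-1/(2*z)) * Real.sqrt (z/(1-z))) *
        (-(1/γ) * Real.sqrt ((1-z)/z^3) * (2*z-1) * Real.exp (1/(2*z)))
        = -(1/γ)*(2*z-1) * ((Real.exp (-1/(2*z)) * Real.exp (1/(2*z))) *
            (Real.sqrt (z/(1-z)) * Real.sqrt ((1-z)/z^3))) := by ring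
      _ = -(1/γ)*(2*z-1)*(1*(1/z)) := by rw [h1, h2]
      _ = (1-2*z)/(γ*z) := by field_simp; ring
  unfold Qhom Khom
  linear_combination key

lemma sqrt_exp_one : Real.sqrt (Real.exp 1) = Real.exp (1/2) := by
  rw [show Real.exp 1 = Real.exp (1/2) ^ 2 by rw [sq, ← Real.exp_add]; norm_num]
  exact Real.sqrt_sq (Real.exp_pos _).le

lemma h_nonneg (γ : ℝ) (hγ : 0 < γ) {z : ℝ} :
    0 ≤ (Real.sqrt (2*Real.pi*Real.exp 1)/γ) *
          (Qhom z * erfi (Real.sqrt ((1-z)/(2*z)))) := by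
  apply mul_nonneg (by positivity)
  exact mul_nonneg (mul_nonneg (Real.exp_pos _).le (Real.sqrt_nonneg _))
    (erfi_nonneg (Real.sqrt_nonneg _))

lemma h_le (γ : ℝ) (hγ : 0 < γ) {z : ℝ} (hz0 : 0 < z) (hz1 : z < 1) :
    (Real.sqrt (2*Real.pi*Real.exp 1)/γ) *
          (Qhom z * erfi (Real.sqrt ((1-z)/(2*z)))) ≤ 2/γ := by
  have h1z : (0:ℝ) < 1 - z := by linarith
  set s := Real.sqrt ((1-z)/(2*z)) with hs
  have hs0 : 0 ≤ s := Real.sqrt_nonneg _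
  have hs2 : s ^ 2 = (1-z)/(2*z) := Real.sq_sqrt (by positivity)
  have hQ : 0 ≤ Qhom z :=
    mul_nonneg (Real.exp_pos _).le (Real.sqrt_nonneg _)
  have step1 : Qhom z * erfi s ≤ Qhom z * ((2 / Real.sqrt Real.pi) * (s * Real.exp (s ^ 2))) :=
    mul_le_mul_of_nonneg_left (erfi_le hs0) hQ
  have step2 : Qhom z * ((2 / Real.sqrt Real.pi) * (s * Real.exp (s ^ 2)))
      = (2 / Real.sqrt Real.pi) * Real.sqrt (1/2) * Real.exp (-(1/2)) := by
    unfold Qhom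
    rw [hs2]
    have e1 : Real.exp (-1/(2*z)) * Real.exp ((1-z)/(2*z)) = Real.exp (-(1/2)) := by
      rw [← Real.exp_add]; congr 1; field_simp; ring
    have e2 : Real.sqrt (z/(1-z)) * s = Real.sqrt (1/2) := by
      rw [hs, ← Real.sqrt_mul (by positivity)]
      congr 1; field_simp
    calc Real.exp (-1/(2*z)) * Real.sqrt (z/(1-z)) *
          ((2 / Real.sqrt Real.pi) * (s * Real.exp ((1-z)/(2*z))))
        = (2 / Real.sqrt Real.pi) * (Real.sqrt (z/(1-z)) * s) *
            (Real.exp (-1/(2*z)) * Real.exp ((1-z)/(2*z))) := by ring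
      _ = _ := by rw [e1, e2]
  have hC : Real.sqrt (2*Real.pi*Real.exp 1) *
      ((2 / Real.sqrt Real.pi) * Real.sqrt (1/2) * Real.exp (-(1/2))) = 2 := by
    rw [show (2*Real.pi*Real.exp 1 : ℝ) = Real.pi * Real.exp 1 * 2 by ring,
      Real.sqrt_mul (by positivity), Real.sqrt_mul Real.pi_pos.le, sqrt_exp_one]
    have hπ : Real.sqrt Real.pi ≠ 0 := by positivity
    have h2 : Real.sqrt 2 * Real.sqrt (1/2) = 1 := by
      rw [← Real.sqrt_mul (by norm_num)]; norm_num
    have h3 : Real.exp (1/2) * Real.exp (-(1/2)) = 1 := by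
      rw [← Real.exp_add]; norm_num
    have h1' : Real.sqrt Real.pi / Real.sqrt Real.pi = 1 := div_self hπ
    linear_combination (2*(Real.sqrt 2*Real.sqrt (1/2))*(Real.exp (1/2)*Real.exp (-(1/2))))*h1'
      + (2*(Real.exp (1/2)*Real.exp (-(1/2))))*h2 + 2*h3
  calc (Real.sqrt (2*Real.pi*Real.exp 1)/γ) * (Qhom z * erfi s)
      ≤ (Real.sqrt (2*Real.pi*Real.exp 1)/γ) *
          ((2 / Real.sqrt Real.pi) * Real.sqrt (1/2) * Real.exp (-(1/2))) := by
        rw [← step2]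
        exact mul_le_mul_of_nonneg_left step1 (by positivity)
    _ = 2/γ := by rw [div_mul_eq_mul_div, hC]

lemma contQK (γ : ℝ) : ContinuousOn (fun z => Qhom z * Khom γ z) (Set.Ioo 0 1) := by
  have hne : ∀ z ∈ Set.Ioo (0:ℝ) 1, 2 * z ≠ 0 := fun z hz => by
    have := hz.1; positivity
  have hne1 : ∀ z ∈ Set.Ioo (0:ℝ) 1, 1 - z ≠ 0 := fun z hz => by
    have := hz.2; intro h; linarith [sub_eq_zero.mp h]
  have hne3 : ∀ z ∈ Set.Ioo (0:ℝ) 1, z ^ 3 ≠ 0 := fun z hz => by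
    have := hz.1; positivity
  have cQ : ContinuousOn Qhom (Set.Ioo 0 1) := by
    unfold Qhom
    exact (Real.continuous_exp.comp_continuousOn
        (continuousOn_const.div (continuousOn_const.mul continuousOn_id) hne)).mul
      (Real.continuous_sqrt.comp_continuousOn
        (continuousOn_id.div (continuousOn_const.sub continuousOn_id) hne1))
  have cK : ContinuousOn (Khom γ) (Set.Ioo 0 1) := by
    unfold Khom
    apply ContinuousOn.add
    · exact (((continuousOn_const.mul (Real.continuous_sqrt.comp_continuousOn
        ((continuousOn_const.sub continuousOn_id).div (continuousOn_pow 3) hne3))).mul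
        ((continuousOn_const.mul continuousOn_id).sub continuousOn_const)).mul
        (Real.continuous_exp.comp_continuousOn
          (continuousOn_const.div (continuousOn_const.mul continuousOn_id) hne)))
    · exact continuousOn_const.mul ((continuous_erfi.comp Real.continuous_sqrt).comp_continuousOn
        ((continuousOn_const.sub continuousOn_id).div (continuousOn_const.mul continuousOn_id) hne))
  exact cQ.mul cK

open Real Filter in
/-- For optimal homodyne detection, R(a,1) < ∞ while R(0,b) = ∞: Q·K is
integrable on (a,1) for every 0 < a < 1, but its integral diverges at 0. -/
theorem hom_QK_integrability (γ : ℝ) (hγ : 0 < γ) :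
    (∀ a : ℝ, 0 < a → a < 1 →
      IntegrableOn (fun z => Qhom z * Khom γ z) (Set.Ioo a 1)) ∧
    (∀ b : ℝ, 0 < b → b < 1 →
      Filter.Tendsto (fun ε => ∫ z in ε..b, Qhom z * Khom γ z)
        (nhdsWithin 0 (Set.Ioi 0)) Filter.atTop) := by
  constructor
  · intro a ha ha1
    have hsub : Set.Ioo a 1 ⊆ Set.Ioo (0:ℝ) 1 := Set.Ioo_subset_Ioo ha.le le_rfl
    refine ⟨((contQK γ).mono hsub).aestronglyMeasurable measurableSet_Ioo, ?_⟩
    apply HasFiniteIntegral.restrict_of_bounded (C := 1/(γ*a) + 2/γ) measure_Ioo_lt_top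
    rw [ae_restrict_iff' measurableSet_Ioo]
    filter_upwards with z hz
    have hz0 : 0 < z := lt_trans ha hz.1
    have hz1 : z < 1 := hz.2
    rw [Real.norm_eq_abs, QK_eq γ hz0 hz1]
    have habs : |(1-2*z)/(γ*z)| ≤ 1/(γ*a) := by
      rw [abs_div, abs_of_pos (by positivity : (0:ℝ) < γ*z)]
      exact div_le_div₀ zero_le_one (abs_le.2 ⟨by linarith, by linarith⟩) (by positivity)
        (by nlinarith [hz.1])
    have h0 := h_nonneg γ hγ (z := z)
    have h2 := h_le γ hγ hz0 hz1
    calc |(1-2*z)/(γ*z) + (Real.sqrt (2*Real.pi*Real.exp 1)/γ) *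
          (Qhom z * erfi (Real.sqrt ((1-z)/(2*z))))|
        ≤ |(1-2*z)/(γ*z)| + |(Real.sqrt (2*Real.pi*Real.exp 1)/γ) *
          (Qhom z * erfi (Real.sqrt ((1-z)/(2*z))))| := abs_add_le _ _
      _ ≤ 1/(γ*a) + 2/γ := by
          rw [abs_of_nonneg h0]
          linarith
  · intro b hb hb1
    have hneg : Tendsto (fun ε : ℝ => -Real.log ε) (nhdsWithin 0 (Set.Ioi 0)) atTop :=
      tendsto_neg_atBot_atTop.comp Real.tendsto_log_nhdsGT_zero
    have hg : Tendsto (fun ε : ℝ => ((Real.log b - 2*b) + -Real.log ε)/γ)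
        (nhdsWithin 0 (Set.Ioi 0)) atTop :=
      (tendsto_atTop_add_const_left _ _ hneg).atTop_div_const hγ
    apply tendsto_atTop_mono' _ _ hg
    filter_upwards [Ioo_mem_nhdsGT_of_mem (Set.left_mem_Ico.2 hb)] with ε hε
    have hε0 : 0 < ε := hε.1
    have hεb : ε < b := hε.2
    have hIcc : Set.Icc ε b ⊆ Set.Ioo (0:ℝ) 1 := fun z hz =>
      ⟨lt_of_lt_of_le hε0 hz.1, lt_of_le_of_lt hz.2 hb1⟩
    have hu : Set.uIcc ε b = Set.Icc ε b := Set.uIcc_of_le hεb.le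
    have hQKint : IntervalIntegrable (fun z => Qhom z * Khom γ z) volume ε b :=
      ContinuousOn.intervalIntegrable (by rw [hu]; exact (contQK γ).mono hIcc)
    have hL1int : IntervalIntegrable (fun z : ℝ => (1/γ) * (1/z)) volume ε b := by
      apply ContinuousOn.intervalIntegrable
      rw [hu]
      exact continuousOn_const.mul (continuousOn_const.div continuousOn_id
        (fun z hz => ne_of_gt (lt_of_lt_of_le hε0 hz.1)))
    have hLint : IntervalIntegrable (fun z : ℝ => (1/γ) * (1/z) - 2/γ) volume ε b :=
      hL1int.sub intervalIntegrable_const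
    have hmono : ∫ z in ε..b, ((1/γ) * (1/z) - 2/γ) ≤ ∫ z in ε..b, Qhom z * Khom γ z := by
      apply intervalIntegral.integral_mono_on hεb.le hLint hQKint
      intro z hz
      obtain ⟨hz0, hz1⟩ := hIcc hz
      rw [QK_eq γ hz0 hz1]
      have h0 := h_nonneg γ hγ (z := z)
      have heq : (1/γ) * (1/z) - 2/γ = (1-2*z)/(γ*z) := by field_simp
      linarith [heq.le]
    have h0mem : (0:ℝ) ∉ Set.uIcc ε b := by
      rw [hu]; intro h; exact absurd h.1 (not_le.2 hε0)
    have hval : ∫ z in ε..b, ((1/γ) * (1/z) - 2/γ)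
        = (1/γ) * (Real.log b - Real.log ε) - (2/γ)*(b-ε) := by
      rw [intervalIntegral.integral_sub hL1int intervalIntegrable_const,
        intervalIntegral.integral_const_mul, integral_one_div h0mem,
        intervalIntegral.integral_const, Real.log_div (ne_of_gt hb) (ne_of_gt hε0)]
      simp [smul_eq_mul]
      ring
    have hfinal : ((Real.log b - 2*b) + -Real.log ε)/γ
        ≤ (1/γ) * (Real.log b - Real.log ε) - (2/γ)*(b-ε) := by
      rw [show (1/γ) * (Real.log b - Real.log ε) - (2/γ)*(b-ε)
          = ((Real.log b - Real.log ε) - 2*(b-ε))/γ by ring]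
      exact (div_le_div_iff_of_pos_right hγ).2 (by linarith)
    calc ((Real.log b - 2*b) + -Real.log ε)/γ
        ≤ (1/γ) * (Real.log b - Real.log ε) - (2/γ)*(b-ε) := hfinal
      _ = ∫ z in ε..b, ((1/γ) * (1/z) - 2/γ) := hval.symm
      _ ≤ ∫ z in ε..b, Qhom z * Khom γ z := hmono
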